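/- The universal bivariant theory M^C_S satisfies the projection formula (B-7): for an independent square (g' : X' → X, f' : X' → Y', f : X → Y, g : Y' → Y) with g confined, and α ∈ M^C_S(X → Y), β ∈ M^C_S(Y' → Z), one has g'_*(g^*α • β) = α • g_*β. -/

import Mathlib

open CategoryTheory CategoryTheory.Limits

universe v u

/-- The underlying object of the bivariant product of generators
`[A →a X] • [B →b Y]` in the universal bivariant theory, for `f : X ⟶ Y`. -/
noncomputable def prodObj {V : Type u} [Category.{v} V] [HasPullbacks V]
    {X Y A B : V} (f : X ⟶ Y) (a : A ⟶ X) (b : B ⟶ Y) : V :=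
  pullback a (pullback.fst f b)

/-- The structure morphism to `X` of the bivariant product of generators. -/
noncomputable def prodMor {V : Type u} [Category.{v} V] [HasPullbacks V]
    {X Y A B : V} (f : X ⟶ Y) (a : A ⟶ X) (b : B ⟶ Y) : prodObj f a b ⟶ X :=
  pullback.fst a (pullback.fst f b) ≫ a

/-- The projection formula (B-7) for the universal bivariant theory
`M^C_S`, on generators: for a fiber (independent) square with `g` confined,
`g'_*(g^*α • β) = α • g_*(β)`; i.e. the two product generators are isomorphic compatibly
with the structure morphisms to `X`. -/
theorem universal_projection_formula {V : Type u} [Category.{v} V] [HasPullbacks V]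
    (C S : MorphismProperty V) [S.IsStableUnderBaseChange] [S.IsStableUnderComposition]
    [C.IsStableUnderBaseChange] [C.IsStableUnderComposition]
    {X' X Y' Y Z A T : V}
    {g' : X' ⟶ X} {f' : X' ⟶ Y'} {f : X ⟶ Y} {g : Y' ⟶ Y}
    (sq : IsPullback g' f' f g) (hg : C g) (e : Y ⟶ Z)
    (a : A ⟶ X) (b : T ⟶ Y')
    (haC : C a) (hbC : C b) (haS : S (a ≫ f)) (hbS : S (b ≫ g ≫ e)) :
    ∃ φ : prodObj f' (pullback.snd a g') b ≅ prodObj f a (b ≫ g),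
      φ.hom ≫ prodMor f a (b ≫ g)
        = prodMor f' (pullback.snd a g') b ≫ g' := by
  -- `P := pullback f' b` together with `fst ≫ g'` and `snd` is a pullback of `f` and `b ≫ g`.
  have K : IsPullback (pullback.fst f' b ≫ g') (pullback.snd f' b) f (b ≫ g) :=
    (IsPullback.of_hasPullback f' b).paste_horiz sq
  -- the big pasted square over `a` and `fst f' b ≫ g'`
  have K2 : IsPullback
      (pullback.fst (pullback.snd a g') (pullback.fst f' b) ≫ pullback.fst a g')
      (pullback.snd (pullback.snd a g') (pullback.fst f' b))
      a (pullback.fst f' b ≫ g') :=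
    (IsPullback.of_hasPullback (pullback.snd a g') (pullback.fst f' b)).paste_horiz
      (IsPullback.of_hasPullback a g')
  -- transport along the iso `P ≅ pullback f (b ≫ g)`
  have K3 : IsPullback
      (pullback.fst (pullback.snd a g') (pullback.fst f' b) ≫ pullback.fst a g')
      (pullback.snd (pullback.snd a g') (pullback.fst f' b) ≫ K.isoPullback.hom)
      a (pullback.fst f (b ≫ g)) := by
    refine K2.of_iso (Iso.refl _) (Iso.refl _) K.isoPullback (Iso.refl _) ?_ ?_ ?_ ?_ <;>
      simp [K.isoPullback_hom_fst]
  refine ⟨K3.isoPullback, ?_⟩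
  have h1 : K3.isoPullback.hom ≫ pullback.fst a (pullback.fst f (b ≫ g))
      = pullback.fst (pullback.snd a g') (pullback.fst f' b) ≫ pullback.fst a g' :=
    K3.isoPullback_hom_fst
  change K3.isoPullback.hom ≫ pullback.fst a (pullback.fst f (b ≫ g)) ≫ a
    = (pullback.fst (pullback.snd a g') (pullback.fst f' b) ≫ pullback.snd a g') ≫ g'
  rw [← Category.assoc, h1]
  rw [Category.assoc, Category.assoc, pullback.condition]
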